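/- arXiv:2408.02059 — 3 statements merged into one kernel-verified Lean document; each statement's English description precedes it below -/
import Mathlib

section
/- Theorem 3.4, T type I (Pearson type VII) case: Let β ∈ {1,2,4,8}, let K ≥ 1 and N ≥ 2 be integers, let t, r ∈ ℕ, let ν > 0, and let h be given on (−1/β, ∞) by h(y) = [Γ(β(K(N−1)+ν)/2) / ((πβ^{−1})^{βK(N−1)/2} Γ(βν/2))] · (1+βy)^{−β(K(N−1)+ν)/2}. Then γ_{t,r} := ∫₀^∞ v^{βK(N−1)/2 + t − 1} h^{(2t+r)}(v) dv = [β^{−t−βK(N−1)/2} Γ(t + βK(N−1)/2) Γ(t + r + βν/2) / Γ(2t + r + β(K(N−1)+ν)/2)] · h^{(2t+r)}(0), where h^{(2t+r)} denotes the (2t+r)-th derivative of h. -/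
open MeasureTheory Real

noncomputable section

lemma betaReal_eval (p b : ℝ) (hp : 0 < p) (hb : 0 < b) :
    ∫ x in (0:ℝ)..1, x ^ (p - 1) * (1 - x) ^ (b - 1) =
      Real.Gamma p * Real.Gamma b / Real.Gamma (p + b) := by
  have key := Complex.Gamma_mul_Gamma_eq_betaIntegral (s := (p : ℂ)) (t := (b : ℂ))
    (by simpa using hp) (by simpa using hb)
  have hbeta : Complex.betaIntegral (p : ℂ) (b : ℂ) =
      ((∫ x in (0:ℝ)..1, x ^ (p - 1) * (1 - x) ^ (b - 1) : ℝ) : ℂ) := by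
    rw [Complex.betaIntegral, ← intervalIntegral.integral_ofReal]
    refine intervalIntegral.integral_congr fun x hx => ?_
    rw [Set.uIcc_of_le (by norm_num)] at hx
    obtain ⟨hx0, hx1⟩ := hx
    push_cast
    rw [Complex.ofReal_cpow hx0, Complex.ofReal_cpow (by linarith)]
    push_cast
    ring
  rw [hbeta] at key
  have hΓ : (0:ℝ) < Real.Gamma (p + b) := Real.Gamma_pos_of_pos (by linarith)
  have key2 : Real.Gamma p * Real.Gamma b =
      Real.Gamma (p + b) * ∫ x in (0:ℝ)..1, x ^ (p - 1) * (1 - x) ^ (b - 1) := by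
    rw [← Complex.ofReal_add, Complex.Gamma_ofReal, Complex.Gamma_ofReal,
      Complex.Gamma_ofReal, ← Complex.ofReal_mul, ← Complex.ofReal_mul] at key
    exact_mod_cast key
  field_simp [key2]
  rw [key2]; ring

lemma betaIoi_eval (p b : ℝ) (hp : 0 < p) (hb : 0 < b) :
    ∫ x in Set.Ioi (0:ℝ), x ^ (p - 1) * (1 + x) ^ (-(p + b)) =
      Real.Gamma p * Real.Gamma b / Real.Gamma (p + b) := by
  have himg : (fun u : ℝ => u / (1 - u)) '' Set.Ioo 0 1 = Set.Ioi 0 := by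
    ext x
    constructor
    · rintro ⟨u, ⟨hu0, hu1⟩, rfl⟩
      have : 0 < 1 - u := by linarith
      exact div_pos hu0 this
    · intro hx
      have hx : (0:ℝ) < x := hx
      refine ⟨x / (1 + x), ⟨by positivity, ?_⟩, ?_⟩
      · rw [div_lt_one (by linarith)]; linarith
      · have h1x : (1:ℝ) + x ≠ 0 := by positivity
        field_simp
        ring
  have hderiv : ∀ u ∈ Set.Ioo (0:ℝ) 1,
      HasDerivWithinAt (fun u : ℝ => u / (1 - u)) (1 / (1 - u) ^ 2) (Set.Ioo 0 1) u := by
    intro u ⟨hu0, hu1⟩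
    have h1u : (1:ℝ) - u ≠ 0 := by intro h; linarith [h]
    have H := (hasDerivAt_id u).div ((hasDerivAt_id u).const_sub 1) h1u
    simp only [id] at H
    have heq : (1 * (1 - u) - u * (-1)) / (1 - u) ^ 2 = 1 / (1 - u) ^ 2 := by
      field_simp
      ring
    rw [heq] at H
    exact H.hasDerivWithinAt
  have hinj : Set.InjOn (fun u : ℝ => u / (1 - u)) (Set.Ioo 0 1) := by
    intro u ⟨hu0, hu1⟩ v ⟨hv0, hv1⟩ huv
    have h1u : (1:ℝ) - u ≠ 0 := by intro h; linarith
    have h1v : (1:ℝ) - v ≠ 0 := by intro h; linarith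
    field_simp at huv
    linarith
  rw [← himg, MeasureTheory.integral_image_eq_integral_abs_deriv_smul measurableSet_Ioo
    hderiv hinj]
  have hcongr : ∀ u ∈ Set.Ioo (0:ℝ) 1,
      |1 / (1 - u) ^ 2| • ((u / (1 - u)) ^ (p - 1) * (1 + u / (1 - u)) ^ (-(p + b)))
        = u ^ (p - 1) * (1 - u) ^ (b - 1) := by
    intro u ⟨hu0, hu1⟩
    have h1u : (0:ℝ) < 1 - u := by linarith
    have h1 : (1:ℝ) + u / (1 - u) = (1 - u)⁻¹ := by field_simp; ring
    rw [h1, smul_eq_mul, abs_of_pos (by positivity),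
      Real.div_rpow hu0.le h1u.le, Real.inv_rpow h1u.le, ← Real.rpow_neg h1u.le, neg_neg]
    rw [show p + b = (p - 1) + 2 + (b - 1) by ring, Real.rpow_add h1u, Real.rpow_add h1u,
      show ((1 - u):ℝ) ^ (2:ℝ) = (1 - u) ^ 2 from by
        rw [← Real.rpow_natCast (1 - u) 2]; norm_num]
    have hne1 : ((1 - u):ℝ) ^ (p - 1) ≠ 0 := by positivity
    have hne2 : ((1 - u):ℝ) ^ 2 ≠ 0 := by positivity
    field_simp
  rw [MeasureTheory.setIntegral_congr_fun measurableSet_Ioo hcongr,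
    ← MeasureTheory.integral_Ioc_eq_integral_Ioo,
    ← intervalIntegral.integral_of_le zero_le_one]
  exact betaReal_eval p b hp hb

lemma iter_deriv_aux (β C c : ℝ) (hβ : 0 < β) (h : ℝ → ℝ)
    (hdef : ∀ y ∈ Set.Ioi (-(1/β)), h y = C * (1 + β * y) ^ c) :
    ∀ m : ℕ, ∀ x ∈ Set.Ioi (-(1/β)), iteratedDeriv m h x =
      (C * β ^ m * ∏ i ∈ Finset.range m, (c - i)) * (1 + β * x) ^ (c - m) := by
  have hpos : ∀ x ∈ Set.Ioi (-(1/β)), (0:ℝ) < 1 + β * x := by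
    intro x hx
    have : β * (-(1/β)) < β * x := by
      exact mul_lt_mul_of_pos_left hx hβ
    rw [mul_neg, mul_one_div, div_self hβ.ne'] at this
    linarith
  intro m
  induction m with
  | zero =>
    intro x hx
    simpa using hdef x hx
  | succ m ih =>
    intro x hx
    rw [iteratedDeriv_succ]
    have hev : iteratedDeriv m h =ᶠ[nhds x]
        fun y => (C * β ^ m * ∏ i ∈ Finset.range m, (c - i)) * (1 + β * y) ^ (c - m) := by
      filter_upwards [isOpen_Ioi.mem_nhds hx] with y hy using ih y hy
    rw [hev.deriv_eq]
    have hx' : (0:ℝ) < 1 + β * x := hpos x hx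
    have Hinner : HasDerivAt (fun y : ℝ => 1 + β * y) β x := by
      simpa using ((hasDerivAt_id x).const_mul β).const_add 1
    have Hrpow := (Real.hasDerivAt_rpow_const (x := 1 + β * x) (p := c - m)
      (Or.inl hx'.ne')).comp x Hinner
    have H := Hrpow.const_mul (C * β ^ m * ∏ i ∈ Finset.range m, (c - i))
    simp only [Function.comp] at H
    rw [H.deriv]
    rw [Finset.prod_range_succ]
    push_cast
    rw [show c - (m + 1 : ℝ) = c - m - 1 by ring]
    ring

/-- **Theorem 3.4, T type I (Pearson type VII) case.**
For `β ∈ {1,2,4,8}`, `ν > 0` and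
`h(y) = [Γ(β(K(N-1)+ν)/2) / ((πβ⁻¹)^{βK(N-1)/2} Γ(βν/2))] (1+βy)^{-β(K(N-1)+ν)/2}`
(on `(-1/β, ∞)`), the kernel integral
`γ_{t,r} = ∫₀^∞ v^{βK(N-1)/2+t-1} h^{(2t+r)}(v) dv` equals
`[β^{-t-βK(N-1)/2} Γ(t+βK(N-1)/2) Γ(t+r+βν/2) / Γ(2t+r+β(K(N-1)+ν)/2)] h^{(2t+r)}(0)`. -/
theorem affine_shape_kernel_integral_pearsonVII
    (β : ℝ) (hβ : β ∈ ({1, 2, 4, 8} : Set ℝ))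
    (K N : ℕ) (hK : 1 ≤ K) (hN : 2 ≤ N) (t r : ℕ) (ν : ℝ) (hν : 0 < ν)
    (h : ℝ → ℝ)
    (hdef : ∀ y ∈ Set.Ioi (-(1 / β)), h y =
      (Real.Gamma (β * ((K : ℝ) * ((N : ℝ) - 1) + ν) / 2) /
          ((Real.pi * β⁻¹) ^ (β * K * ((N : ℝ) - 1) / 2) * Real.Gamma (β * ν / 2))) *
        (1 + β * y) ^ (-(β * ((K : ℝ) * ((N : ℝ) - 1) + ν) / 2))) :
    ∫ v in Set.Ioi (0 : ℝ),
        v ^ (β * K * ((N : ℝ) - 1) / 2 + t - 1) * iteratedDeriv (2 * t + r) h v =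
      (β ^ (-(t : ℝ) - β * K * ((N : ℝ) - 1) / 2) *
          Real.Gamma ((t : ℝ) + β * K * ((N : ℝ) - 1) / 2) *
          Real.Gamma ((t : ℝ) + r + β * ν / 2) /
          Real.Gamma (2 * (t : ℝ) + r + β * ((K : ℝ) * ((N : ℝ) - 1) + ν) / 2)) *
        iteratedDeriv (2 * t + r) h 0 := by
  have hβpos : (0:ℝ) < β := by
    simp only [Set.mem_insert_iff, Set.mem_singleton_iff] at hβ
    rcases hβ with rfl | rfl | rfl | rfl <;> norm_num
  set a : ℝ := β * ((K : ℝ) * ((N : ℝ) - 1) + ν) / 2 with ha_def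
  set k : ℝ := β * K * ((N : ℝ) - 1) / 2 with hk_def
  set b : ℝ := (t : ℝ) + r + β * ν / 2 with hb_def
  set C : ℝ := Real.Gamma a / ((Real.pi * β⁻¹) ^ k * Real.Gamma (β * ν / 2)) with hC_def
  have hKr : (1:ℝ) ≤ K := by exact_mod_cast hK
  have hNr : (2:ℝ) ≤ N := by exact_mod_cast hN
  have hk : 0 < k := by
    rw [hk_def]
    apply div_pos _ two_pos
    exact mul_pos (mul_pos hβpos (by linarith)) (by linarith)
  have hp0 : 0 < k + (t:ℝ) := by positivity
  have hb : 0 < b := by rw [hb_def]; positivity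
  have hak : a = k + β * ν / 2 := by rw [ha_def, hk_def]; ring
  have hder := iter_deriv_aux β C (-a) hβpos h hdef
  have h0mem : (0:ℝ) ∈ Set.Ioi (-(1/β)) := by
    simp only [Set.mem_Ioi]
    have : (0:ℝ) < 1/β := by positivity
    linarith
  have hD0 : iteratedDeriv (2*t+r) h 0 =
      C * β ^ (2*t+r) * ∏ i ∈ Finset.range (2*t+r), (-a - (i:ℝ)) := by
    rw [hder (2*t+r) 0 h0mem]
    norm_num
  have hIoi : Set.Ioi (0:ℝ) ⊆ Set.Ioi (-(1/β)) := by
    apply Set.Ioi_subset_Ioi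
    have : (0:ℝ) < 1/β := by positivity
    linarith
  have hcong : ∀ v ∈ Set.Ioi (0:ℝ),
      v ^ (k + (t:ℝ) - 1) * iteratedDeriv (2*t+r) h v =
      ((C * β ^ (2*t+r) * ∏ i ∈ Finset.range (2*t+r), (-a - (i:ℝ))) * β ^ (-(k + (t:ℝ) - 1))) *
        ((β*v) ^ (k + (t:ℝ) - 1) * (1 + β*v) ^ (-(k + (t:ℝ) + b))) := by
    intro v hv
    have hv' : (0:ℝ) < v := hv
    rw [hder (2*t+r) v (hIoi hv)]
    have h2 : -a - ((2*t+r : ℕ) : ℝ) = -(k + (t:ℝ) + b) := by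
      rw [hak, hb_def]; push_cast; ring
    have h1 : (β*v) ^ (k + (t:ℝ) - 1) = β ^ (k + (t:ℝ) - 1) * v ^ (k + (t:ℝ) - 1) :=
      Real.mul_rpow hβpos.le hv'.le
    rw [h2, h1, Real.rpow_neg hβpos.le (k + (t:ℝ) - 1)]
    have hne : β ^ (k + (t:ℝ) - 1) ≠ 0 := (Real.rpow_pos_of_pos hβpos _).ne'
    field_simp
  have hsub : ∫ v in Set.Ioi (0:ℝ), (β*v) ^ (k + (t:ℝ) - 1) * (1 + β*v) ^ (-(k + (t:ℝ) + b)) =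
      β⁻¹ * ∫ x in Set.Ioi (0:ℝ), x ^ (k + (t:ℝ) - 1) * (1 + x) ^ (-(k + (t:ℝ) + b)) := by
    have := MeasureTheory.integral_comp_mul_left_Ioi
      (fun x : ℝ => x ^ (k + (t:ℝ) - 1) * (1 + x) ^ (-(k + (t:ℝ) + b))) 0 hβpos
    simpa [mul_zero] using this
  rw [MeasureTheory.setIntegral_congr_fun measurableSet_Ioi hcong,
    MeasureTheory.integral_const_mul _ _, hsub, betaIoi_eval (k + (t:ℝ)) b hp0 hb, hD0]
  have hβpow : β ^ (-(k + (t:ℝ) - 1)) * β⁻¹ = β ^ (-(t:ℝ) - k) := by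
    rw [← Real.rpow_neg_one β, ← Real.rpow_add hβpos]
    congr 1
    ring
  rw [show 2 * (t:ℝ) + r + a = k + (t:ℝ) + b by rw [hak, hb_def]; ring,
    show (t:ℝ) + k = k + (t:ℝ) from add_comm _ _, ← hβpow]
  ring
end
end

section
/- Theorem 3.4, Gegenbauer type I (Pearson type II) case: Let β ∈ {1,2,4,8}, let K ≥ 1 and N ≥ 2 be integers, let t, r ∈ ℕ, and let q > 0 be a real number with βq > 2t + r − 1 and βq ∉ ℤ; assume moreover that p := t + βK(N−1)/2 is a positive integer. Let h be given on (−∞, 1/β) by h(y) = [Γ(βK(N−1)/2 + βq + 1) / ((πβ^{−1})^{βK(N−1)/2} Γ(βq + 1))] · (1−βy)^{βq}. Then ∫₀^{1/β} v^{p−1} h^{(2t+r)}(v) dv = [Γ(t + βK(N−1)/2) Γ(r + t − βK(N−1)/2 − βq) / ((−β)^{t+βK(N−1)/2} Γ(2t + r − βq))] · h^{(2t+r)}(0), where h^{(2t+r)} denotes the (2t+r)-th derivative of h and (−β)^{p} is the p-th integer power of −β. -/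
open MeasureTheory Real

noncomputable section

lemma real_beta_aux {a b : ℝ} (ha : 0 < a) (hb : 0 < b) :
    ∫ x in (0:ℝ)..1, x ^ (a - 1) * (1 - x) ^ (b - 1) =
      Real.Gamma a * Real.Gamma b / Real.Gamma (a + b) := by
  have h1 : Complex.Gamma a * Complex.Gamma b =
      Complex.Gamma ((a : ℂ) + b) * Complex.betaIntegral a b :=
    Complex.Gamma_mul_Gamma_eq_betaIntegral (by simpa using ha) (by simpa using hb)
  have h2 : Complex.betaIntegral a b =
      ((∫ x in (0:ℝ)..1, x ^ (a - 1) * (1 - x) ^ (b - 1) : ℝ) : ℂ) := by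
    rw [Complex.betaIntegral, ← intervalIntegral.integral_ofReal]
    refine intervalIntegral.integral_congr fun x hx => ?_
    rw [Set.uIcc_of_le (by norm_num : (0:ℝ) ≤ 1)] at hx
    rw [Complex.ofReal_mul, Complex.ofReal_cpow hx.1, Complex.ofReal_cpow (by linarith [hx.2])]
    push_cast
    ring
  have h3 : Real.Gamma (a + b) ≠ 0 := (Real.Gamma_pos_of_pos (by linarith)).ne'
  have h4 : ((Real.Gamma a * Real.Gamma b : ℝ) : ℂ)
      = ((Real.Gamma (a+b) * ∫ x in (0:ℝ)..1, x ^ (a - 1) * (1 - x) ^ (b - 1) : ℝ) : ℂ) := by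
    push_cast
    rw [← Complex.Gamma_ofReal, ← Complex.Gamma_ofReal, ← Complex.Gamma_ofReal]
    rw [h1, h2]; push_cast; ring
  have h5 := Complex.ofReal_inj.mp h4
  field_simp
  linarith [h5]

lemma gamma_add_nat_aux (x : ℝ) (m : ℕ) (hx : ∀ j : ℕ, j < m → x + j ≠ 0) :
    Real.Gamma (x + m) = (∏ j ∈ Finset.range m, (x + j)) * Real.Gamma x := by
  induction m with
  | zero => simp
  | succ m ih =>
    have h1 : x + ((m+1 : ℕ) : ℝ) = (x + m) + 1 := by push_cast; ring
    rw [h1, Real.Gamma_add_one (hx m (Nat.lt_succ_self m)),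
      ih (fun j hj => hx j (hj.trans (Nat.lt_succ_self m))), Finset.prod_range_succ]
    ring

set_option maxHeartbeats 1000000

/-- **Theorem 3.4, Gegenbauer type I (Pearson type II) case.**
For `β ∈ {1,2,4,8}`, `q > 0` with `βq > 2t+r-1`, `βq` not an integer, and
`p = t + βK(N-1)/2` a positive integer, with
`h(y) = [Γ(βK(N-1)/2+βq+1) / ((πβ⁻¹)^{βK(N-1)/2} Γ(βq+1))] (1-βy)^{βq}` on `(-∞, 1/β)`,
one has `∫₀^{1/β} v^{p-1} h^{(2t+r)}(v) dv =
[Γ(t+βK(N-1)/2) Γ(r+t-βK(N-1)/2-βq) / ((-β)^p Γ(2t+r-βq))] h^{(2t+r)}(0)`. -/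
theorem affine_shape_kernel_integral_pearsonII
    (β : ℝ) (hβ : β ∈ ({1, 2, 4, 8} : Set ℝ))
    (K N : ℕ) (hK : 1 ≤ K) (hN : 2 ≤ N) (t r : ℕ)
    (q : ℝ) (hq : 0 < q) (hq1 : 2 * (t : ℝ) + r - 1 < β * q)
    (hq2 : ∀ z : ℤ, β * q ≠ (z : ℝ))
    (p : ℕ) (hp : 1 ≤ p) (hpdef : (p : ℝ) = (t : ℝ) + β * K * ((N : ℝ) - 1) / 2)
    (h : ℝ → ℝ)
    (hdef : ∀ y ∈ Set.Iio (1 / β), h y =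
      (Real.Gamma (β * K * ((N : ℝ) - 1) / 2 + β * q + 1) /
          ((Real.pi * β⁻¹) ^ (β * K * ((N : ℝ) - 1) / 2) * Real.Gamma (β * q + 1))) *
        (1 - β * y) ^ (β * q)) :
    ∫ v in (0 : ℝ)..(1 / β), v ^ ((p : ℝ) - 1) * iteratedDeriv (2 * t + r) h v =
      (Real.Gamma ((t : ℝ) + β * K * ((N : ℝ) - 1) / 2) *
          Real.Gamma ((r : ℝ) + t - β * K * ((N : ℝ) - 1) / 2 - β * q) /
          ((-β) ^ p * Real.Gamma (2 * (t : ℝ) + r - β * q))) *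
        iteratedDeriv (2 * t + r) h 0 := by
  have hβpos : 0 < β := by
    simp only [Set.mem_insert_iff, Set.mem_singleton_iff] at hβ
    rcases hβ with rfl | rfl | rfl | rfl <;> norm_num
  set a : ℝ := β * K * ((N : ℝ) - 1) / 2 with ha
  set s : ℝ := β * q with hs
  set n : ℕ := 2 * t + r with hn
  set C : ℝ := Real.Gamma (a + s + 1) / ((Real.pi * β⁻¹) ^ a * Real.Gamma (s + 1)) with hCdef
  have hnR : (n : ℝ) = 2 * (t : ℝ) + r := by rw [hn]; push_cast; ring
  have hn1 : (n : ℝ) - 1 < s := by rw [hnR]; linarith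
  have hppos : (0 : ℝ) < p := by exact_mod_cast hp
  -- non-integrality consequences
  have hsne : ∀ z : ℤ, s ≠ (z : ℝ) := hq2
  -- 0 < 1/β
  have hinv : (0 : ℝ) < 1 / β := by positivity
  -- derivative formula on Iio (1/β)
  have key : ∀ k : ℕ, ∀ x ∈ Set.Iio (1 / β), iteratedDeriv k h x =
      C * ((∏ j ∈ Finset.range k, (s - j)) * ((-β) ^ k * (1 - β * x) ^ (s - k))) := by
    intro k
    induction k with
    | zero =>
      intro x hx
      rw [iteratedDeriv_zero, hdef x hx]
      simp
    | succ k ih =>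
      intro x hx
      have hxlt : x < 1 / β := hx
      have hpos : 0 < 1 - β * x := by
        have h1 : β * x < β * (1 / β) := by exact mul_lt_mul_of_pos_left hxlt hβpos
        rw [mul_one_div_cancel hβpos.ne'] at h1
        linarith
      rw [iteratedDeriv_succ]
      have heq : deriv (iteratedDeriv k h) x =
          deriv (fun y => C * ((∏ j ∈ Finset.range k, (s - j)) *
            ((-β) ^ k * (1 - β * y) ^ (s - k)))) x := by
        apply Filter.EventuallyEq.deriv_eq
        filter_upwards [Iio_mem_nhds hxlt] with y hy
        exact ih y hy
      rw [heq]
      have h1 : HasDerivAt (fun y : ℝ => 1 - β * y) (-β) x := by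
        simpa using ((hasDerivAt_id x).const_mul β).const_sub 1
      have hd : HasDerivAt (fun y : ℝ => (1 - β * y) ^ (s - (k : ℝ)))
          ((-β) * ((s - k) * (1 - β * x) ^ (s - (k : ℝ) - 1))) x := by
        have := h1.rpow_const (p := s - (k : ℝ)) (Or.inl hpos.ne')
        convert this using 1
        ring
      have hd2 : HasDerivAt (fun y => C * ((∏ j ∈ Finset.range k, (s - j)) *
            ((-β) ^ k * (1 - β * y) ^ (s - (k : ℝ)))))
          (C * ((∏ j ∈ Finset.range (k + 1), (s - j)) *
            ((-β) ^ (k + 1) * (1 - β * x) ^ (s - ((k + 1 : ℕ) : ℝ))))) x := by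
        have h2 := (((hd.const_mul ((-β) ^ k)).const_mul
          (∏ j ∈ Finset.range k, (s - j))).const_mul C)
        refine h2.congr_deriv ?_
        rw [Finset.prod_range_succ,
          show s - ((k + 1 : ℕ) : ℝ) = s - (k : ℝ) - 1 by push_cast; ring]
        ring
      exact hd2.deriv
  have h0mem : (0 : ℝ) ∈ Set.Iio (1 / β) := hinv
  have hID0 : iteratedDeriv n h 0 =
      C * ((∏ j ∈ Finset.range n, (s - j)) * (-β) ^ n) := by
    rw [key n 0 h0mem]
    norm_num
  -- replace the integrand
  have hint1 : (∫ v in (0 : ℝ)..(1 / β), v ^ ((p : ℝ) - 1) * iteratedDeriv n h v)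
      = (C * ((∏ j ∈ Finset.range n, (s - j)) * (-β) ^ n)) *
        ∫ v in (0 : ℝ)..(1 / β), v ^ ((p : ℝ) - 1) * (1 - β * v) ^ (s - (n : ℝ)) := by
    rw [← intervalIntegral.integral_const_mul]
    apply intervalIntegral.integral_congr_ae
    have hae : ∀ᵐ x : ℝ, x ≠ 1 / β := by
      have := MeasureTheory.measure_singleton (μ := (volume : Measure ℝ)) (1 / β)
      rw [MeasureTheory.ae_iff]
      simp only [ne_eq, not_not]
      simpa using this
    filter_upwards [hae] with x hx1 hxI
    rw [Set.uIoc_of_le hinv.le] at hxI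
    have hxlt : x < 1 / β := lt_of_le_of_ne hxI.2 hx1
    rw [key n x hxlt]
    ring
  -- scaling substitution
  have hsplit : (∫ x in (0 : ℝ)..(1 / β), ((β * x) ^ ((p : ℝ) - 1) *
        (1 - β * x) ^ (s - (n : ℝ))))
      = β ^ ((p : ℝ) - 1) *
        ∫ v in (0 : ℝ)..(1 / β), v ^ ((p : ℝ) - 1) * (1 - β * v) ^ (s - (n : ℝ)) := by
    rw [← intervalIntegral.integral_const_mul]
    apply intervalIntegral.integral_congr
    intro x hx
    rw [Set.uIcc_of_le hinv.le] at hx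
    dsimp only
    rw [Real.mul_rpow hβpos.le hx.1]
    ring
  have hcomp := intervalIntegral.integral_comp_mul_left
    (f := fun u : ℝ => u ^ ((p : ℝ) - 1) * (1 - u) ^ (s - (n : ℝ)))
    (a := (0 : ℝ)) (b := 1 / β) (c := β) hβpos.ne'
  rw [mul_zero, mul_one_div_cancel hβpos.ne'] at hcomp
  have hbeta : (∫ u in (0 : ℝ)..1, u ^ ((p : ℝ) - 1) * (1 - u) ^ (s - (n : ℝ)))
      = Real.Gamma p * Real.Gamma (s - n + 1) / Real.Gamma ((p : ℝ) + (s - n + 1)) := by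
    conv_lhs => rw [show s - (n : ℝ) = (s - n + 1) - 1 by ring]
    exact real_beta_aux hppos (show (0:ℝ) < s - (n:ℝ) + 1 by linarith)
  -- value of the inner integral
  have hrp : (0 : ℝ) < β ^ ((p : ℝ) - 1) := Real.rpow_pos_of_pos hβpos _
  have hJ : (∫ v in (0 : ℝ)..(1 / β), v ^ ((p : ℝ) - 1) * (1 - β * v) ^ (s - (n : ℝ)))
      = (Real.Gamma p * Real.Gamma (s - n + 1) / Real.Gamma ((p : ℝ) + (s - n + 1))) / β ^ p := by
    have h6 : β ^ ((p : ℝ) - 1) *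
        (∫ v in (0 : ℝ)..(1 / β), v ^ ((p : ℝ) - 1) * (1 - β * v) ^ (s - (n : ℝ)))
        = β⁻¹ * (Real.Gamma p * Real.Gamma (s - n + 1) / Real.Gamma ((p : ℝ) + (s - n + 1))) := by
      rw [← hsplit, hcomp, hbeta, smul_eq_mul]
    have hpow : β * β ^ ((p : ℝ) - 1) = (β : ℝ) ^ p := by
      rw [Real.rpow_sub hβpos, Real.rpow_one, Real.rpow_natCast]
      field_simp
    have h7 : (∫ v in (0 : ℝ)..(1 / β), v ^ ((p : ℝ) - 1) * (1 - β * v) ^ (s - (n : ℝ)))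
        = (β ^ ((p : ℝ) - 1))⁻¹ *
          (β⁻¹ * (Real.Gamma p * Real.Gamma (s - n + 1) / Real.Gamma ((p : ℝ) + (s - n + 1)))) := by
      rw [← h6, inv_mul_cancel_left₀ hrp.ne']
    rw [h7, ← hpow]
    field_simp
  -- Gamma identity
  set z : ℝ := (n : ℝ) - s with hz
  have hP1 : ∀ j : ℕ, (1 - z + j) ≠ 0 := by
    intro j hj0
    apply hsne ((n : ℤ) - 1 - j)
    push_cast
    rw [hz] at hj0
    linarith
  have hP2 : ∀ j : ℕ, j < p → (z - p + j) ≠ 0 := by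
    intro j hjp hj0
    apply hsne ((n : ℤ) - p + j)
    push_cast
    rw [hz] at hj0
    linarith
  have hG1 : Real.Gamma (1 - z + p) = (∏ j ∈ Finset.range p, (1 - z + j)) *
      Real.Gamma (1 - z) := gamma_add_nat_aux _ _ (fun j _ => hP1 j)
  have hG2 : Real.Gamma z = (∏ j ∈ Finset.range p, (z - p + j)) * Real.Gamma (z - p) := by
    have hww := gamma_add_nat_aux (z - (p : ℝ)) p (fun j hj => hP2 j hj)
    rwa [show z - (p : ℝ) + ((p : ℕ) : ℝ) = z by ring] at hww
  have hG3 : (∏ j ∈ Finset.range p, (z - p + j))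
      = (-1 : ℝ) ^ p * ∏ j ∈ Finset.range p, (1 - z + j) := by
    rw [← Finset.prod_range_reflect (fun j => (1 - z + j)) p]
    rw [show ((-1 : ℝ)) ^ p = ∏ _j ∈ Finset.range p, (-1 : ℝ) by simp, ← Finset.prod_mul_distrib]
    apply Finset.prod_congr rfl
    intro j hj
    rw [Finset.mem_range] at hj
    have hj1 : j + 1 ≤ p := hj
    have : ((p - 1 - j : ℕ) : ℝ) = (p : ℝ) - 1 - j := by
      have h2 : 1 + j ≤ p := by omega
      push_cast [Nat.sub_sub, Nat.cast_sub h2]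
      ring
    rw [this]
    ring
  have hPne : (∏ j ∈ Finset.range p, (1 - z + j)) ≠ 0 :=
    Finset.prod_ne_zero_iff.mpr (fun j _ => hP1 j)
  have hG1ne : Real.Gamma (1 - z) ≠ 0 := by
    apply Real.Gamma_ne_zero
    intro m hm
    apply hsne ((n : ℤ) - 1 - m)
    push_cast
    rw [hz] at hm
    linarith
  have hG2ne : Real.Gamma (z - p) ≠ 0 := by
    apply Real.Gamma_ne_zero
    intro m hm
    apply hsne ((n : ℤ) - p + m)
    push_cast
    rw [hz] at hm
    linarith
  -- assemble
  rw [hint1, hJ, hID0, ← hpdef]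
  have harg1 : (r : ℝ) + t - a - s = z - p := by
    rw [hz, hnR, hpdef]; ring
  have harg2 : 2 * (t : ℝ) + r - s = z := by rw [hz, hnR]
  have harg3 : s - n + 1 = 1 - z := by rw [hz]; ring
  have harg4 : (p : ℝ) + (1 - z) = 1 - z + p := by ring
  rw [harg1, harg2, harg3, harg4, hG1, hG2, hG3]
  have hbne : (β : ℝ) ^ p ≠ 0 := (pow_pos hβpos p).ne'
  have hnegb : (-β : ℝ) ^ p = (-1 : ℝ) ^ p * β ^ p := by
    rw [neg_pow]
  rw [hnegb]
  have hsq : (-1 : ℝ) ^ p * (-1 : ℝ) ^ p = 1 := by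
    rw [← mul_pow]; norm_num
  have hden : (-1 : ℝ) ^ p * β ^ p *
      ((-1 : ℝ) ^ p * (∏ j ∈ Finset.range p, (1 - z + ↑j)) * Real.Gamma (z - ↑p))
      = (∏ j ∈ Finset.range p, (1 - z + ↑j)) * Real.Gamma (z - ↑p) * β ^ p := by
    linear_combination (β ^ p * ((∏ j ∈ Finset.range p, (1 - z + ↑j)) *
      Real.Gamma (z - ↑p))) * hsq
  rw [hden]
  field_simp
end
end

section
/- Normalisation of the multimatrix variate Pearson type VII density: Let m ≥ 1, k ≥ 1 and n₀,n₁,…,n_k ≥ 1 be integers and set N = n₀+n₁+⋯+n_k. Then ∫_{ℝ^{n₁×m}} ⋯ ∫_{ℝ^{n_k×m}} (1 + Σ_{i=1}^{k} ‖tᵢ‖²)^{−Nm/2} dt_k ⋯ dt₁ = π^{(N−n₀)m/2} Γ(n₀m/2) / Γ(Nm/2), where the integration is with respect to the product of the Lebesgue measures on the matrix spaces ℝ^{nᵢ×m}. -/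
open MeasureTheory Real Matrix

noncomputable section

/-- The measurable space structure on real matrix spaces (entrywise). -/
instance matrixMeasurableSpace (n m : ℕ) : MeasurableSpace (Matrix (Fin n) (Fin m) ℝ) :=
  MeasurableSpace.pi (m := fun _ : Fin n => MeasurableSpace.pi)

/-- Squared Frobenius norm `‖A‖² = tr(AᵀA)`. -/
def frobSq {n m : ℕ} (A : Matrix (Fin n) (Fin m) ℝ) : ℝ :=
  Matrix.trace (Aᵀ * A)

/-- Lebesgue measure on the matrix space `ℝ^{n×m}`. -/
def matVolume (n m : ℕ) : Measure (Matrix (Fin n) (Fin m) ℝ) :=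
  (volume : Measure ((Fin n) → (Fin m) → ℝ))

lemma frobSq_eq {n m : ℕ} (A : Matrix (Fin n) (Fin m) ℝ) :
    frobSq A = ∑ a, ∑ b, (A a b) ^ 2 := by
  simp only [frobSq, Matrix.trace, Matrix.diag, Matrix.mul_apply, Matrix.transpose_apply, sq]
  exact Finset.sum_comm

lemma frobSq_nonneg {n m : ℕ} (A : Matrix (Fin n) (Fin m) ℝ) : 0 ≤ frobSq A := by
  rw [frobSq_eq]; positivity

lemma measurable_frobSq {n m : ℕ} : Measurable (fun A : Matrix (Fin n) (Fin m) ℝ => frobSq A) := by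
  simp only [frobSq_eq]
  exact Finset.measurable_sum _ fun a _ => Finset.measurable_sum _ fun b _ =>
    ((measurable_pi_apply a).comp measurable_id |>.eval (a := b)).pow_const 2

-- gaussian over a matrix space
lemma gauss_mat {n m : ℕ} {u : ℝ} (hu : 0 < u) :
    ∫ A, Real.exp (-(u * frobSq A)) ∂(matVolume n m) = Real.sqrt (π / u) ^ (n * m) := by
  have h1 : ∀ A : Matrix (Fin n) (Fin m) ℝ,
      Real.exp (-(u * frobSq A)) = ∏ a, ∏ b, Real.exp (-(u * (A a b) ^ 2)) := by
    intro A
    rw [frobSq_eq, Finset.mul_sum]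
    simp_rw [Finset.mul_sum, ← Real.exp_sum, ← Finset.sum_neg_distrib]
  simp_rw [h1]
  show (∫ A : (Fin n) → (Fin m) → ℝ, ∏ a, ∏ b, Real.exp (-(u * (A a b) ^ 2))) = _
  rw [volume_pi, MeasureTheory.integral_fintype_prod_eq_pow (ι := Fin n)
      (fun y : (Fin m) → ℝ => ∏ b, Real.exp (-(u * (y b) ^ 2))),
    volume_pi, MeasureTheory.integral_fintype_prod_eq_pow (ι := Fin m) (fun x : ℝ => Real.exp (-(u * x ^ 2)))]
  rw [show (fun x : ℝ => Real.exp (-(u * x ^ 2))) = fun x => Real.exp (-u * x ^ 2) by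
    funext x; rw [neg_mul], integral_gaussian u]
  simp [Fintype.card_fin, ← pow_mul, mul_comm m n]

lemma gauss_mat_integrable {n m : ℕ} {u : ℝ} (hu : 0 < u) :
    Integrable (fun A => Real.exp (-(u * frobSq A))) (matVolume n m) := by
  have h1 : ∀ A : Matrix (Fin n) (Fin m) ℝ,
      Real.exp (-(u * frobSq A)) = ∏ a, ∏ b, Real.exp (-(u * (A a b) ^ 2)) := by
    intro A
    rw [frobSq_eq, Finset.mul_sum]
    simp_rw [Finset.mul_sum, ← Real.exp_sum, ← Finset.sum_neg_distrib]
  simp_rw [h1]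
  show Integrable (fun A : (Fin n) → (Fin m) → ℝ => ∏ a, ∏ b, Real.exp (-(u * (A a b) ^ 2))) volume
  apply Integrable.fintype_prod (f := fun _ (y : (Fin m) → ℝ) => ∏ b, Real.exp (-(u * (y b) ^ 2)))
  intro _
  apply Integrable.fintype_prod (f := fun _ (x : ℝ) => Real.exp (-(u * x ^ 2)))
  intro _
  simpa [neg_mul] using integrable_exp_neg_mul_sq hu

lemma exp_prod_aux {k : ℕ} {n : Fin (k+1) → ℕ} {m : ℕ} (u : ℝ)
    (t : (i : Fin k) → Matrix (Fin (n i.succ)) (Fin m) ℝ) :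
    Real.exp (-(u * ∑ i, frobSq (t i))) = ∏ i, Real.exp (-(u * frobSq (t i))) := by
  rw [Finset.mul_sum]
  simp_rw [← Real.exp_sum, ← Finset.sum_neg_distrib]

/-- **Normalisation of the multimatrix variate Pearson type VII density.**
`∫⋯∫ (1+Σᵢ‖tᵢ‖²)^{-Nm/2} dt₁⋯dt_k = π^{(N-n₀)m/2} Γ(n₀m/2)/Γ(Nm/2)`, integrating with
respect to the product of the Lebesgue measures on the matrix spaces `ℝ^{nᵢ×m}`. -/
theorem pearsonVII_normalisation
    (m k : ℕ) (hm : 1 ≤ m) (hk : 1 ≤ k)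
    (n : Fin (k + 1) → ℕ) (hn : ∀ i, 1 ≤ n i)
    (N : ℕ) (hN : N = ∑ i, n i) :
    ∫ t, (1 + ∑ i : Fin k, frobSq (t i)) ^ (-((N : ℝ) * m / 2))
        ∂(Measure.pi fun i : Fin k => matVolume (n i.succ) m) =
      Real.pi ^ (((N : ℝ) - (n 0 : ℝ)) * m / 2) * Real.Gamma ((n 0 : ℝ) * m / 2) /
        Real.Gamma ((N : ℝ) * m / 2) := by
  classical
  have hπ : (0:ℝ) < π := Real.pi_pos
  haveI hinner : SigmaFinite (volume : Measure (Fin m → ℝ)) :=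
    MeasureTheory.Measure.pi.sigmaFinite _
  haveI hSF : ∀ i : Fin k, SigmaFinite (matVolume (n i.succ) m) := fun i =>
    show SigmaFinite (Measure.pi fun _ : Fin (n i.succ) => (volume : Measure (Fin m → ℝ))) from
      MeasureTheory.Measure.pi.sigmaFinite _
  set μ : Measure ((i : Fin k) → Matrix (Fin (n i.succ)) (Fin m) ℝ) :=
    Measure.pi fun i : Fin k => matVolume (n i.succ) m with hμdef
  haveI : SigmaFinite μ := by rw [hμdef]; infer_instance
  set s : ℝ := (N:ℝ) * m / 2 with hsdef
  set c : ℝ := (n 0 : ℝ) * m / 2 with hcdef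
  set M : ℕ := ∑ i : Fin k, n i.succ with hMdef
  set D : ℕ := M * m with hDdef
  have hNM : N = n 0 + M := by rw [hN, Fin.sum_univ_succ]
  have hMpos : 0 < M := by
    refine Finset.sum_pos (fun i _ => hn i.succ) ?_
    haveI : Nonempty (Fin k) := Fin.pos_iff_nonempty.mp hk
    exact Finset.univ_nonempty
  have hcpos : 0 < c := by
    have h0 : 0 < n 0 := hn 0
    rw [hcdef]; positivity
  have hsc : s = c + (D:ℝ)/2 := by
    rw [hsdef, hcdef, hDdef, hNM]; push_cast; ring
  have hspos : 0 < s := by rw [hsc]; positivity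
  set S : ((i : Fin k) → Matrix (Fin (n i.succ)) (Fin m) ℝ) → ℝ :=
    fun t => ∑ i, frobSq (t i) with hSdef
  have hSnn : ∀ t, 0 ≤ S t := fun t => Finset.sum_nonneg fun i _ => frobSq_nonneg _
  have hSmeas : Measurable S :=
    Finset.measurable_sum _ fun i _ => measurable_frobSq.comp (measurable_pi_apply i)
  have h1S : ∀ t, (0:ℝ) < 1 + S t := fun t => by linarith [hSnn t]
  -- the kernel
  set F : ((i : Fin k) → Matrix (Fin (n i.succ)) (Fin m) ℝ) → ℝ → ENNReal :=
    fun t u => ENNReal.ofReal (u ^ (s - 1) * Real.exp (-((1 + S t) * u))) with hFdef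
  have hFmeas : Measurable (Function.uncurry F) := by
    apply Measurable.ennreal_ofReal
    fun_prop
  -- inner integral in u
  have hInt1 : ∀ t, IntegrableOn (fun u : ℝ => u ^ (s-1) * Real.exp (-((1 + S t) * u)))
      (Set.Ioi 0) := by
    intro t
    have := integrableOn_rpow_mul_exp_neg_mul_rpow (p := 1) (s := s - 1) (b := 1 + S t)
      (by linarith) one_pos (h1S t)
    simpa only [Real.rpow_one, neg_mul] using this
  have key : ∀ t, (∫ u in Set.Ioi (0:ℝ), u ^ (s-1) * Real.exp (-((1 + S t) * u)))
      = (1 + S t) ^ (-s) * Real.Gamma s := by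
    intro t
    rw [Real.integral_rpow_mul_exp_neg_mul_Ioi hspos (h1S t), one_div,
      Real.inv_rpow (h1S t).le, ← Real.rpow_neg (h1S t).le]
  -- Gaussian integral over the product of matrix spaces
  letI : ∀ i : Fin k, MeasureSpace (Matrix (Fin (n i.succ)) (Fin m) ℝ) :=
    fun i => ⟨matVolume _ _⟩
  have hGaussInt : ∀ u : ℝ, 0 < u → Integrable (fun t => Real.exp (-(u * S t))) μ := by
    intro u hu
    simp only [hSdef]
    simp_rw [exp_prod_aux u]
    exact Integrable.fintype_prod_dep
      (f := fun (i : Fin k) (A : Matrix (Fin (n i.succ)) (Fin m) ℝ) => Real.exp (-(u * frobSq A)))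
      (fun i => gauss_mat_integrable hu)
  have hGauss : ∀ u : ℝ, 0 < u → (∫ t, Real.exp (-(u * S t)) ∂μ) = Real.sqrt (π / u) ^ D := by
    intro u hu
    simp only [hSdef]
    simp_rw [exp_prod_aux u]
    rw [show (∫ t, ∏ i, Real.exp (-(u * frobSq (t i))) ∂μ)
        = ∫ x : (i : Fin k) → Matrix (Fin (n i.succ)) (Fin m) ℝ,
            ∏ i, Real.exp (-(u * frobSq (x i))) from rfl,
      volume_pi, MeasureTheory.integral_fintype_prod_eq_prod (ι := Fin k)
        (fun (i : Fin k) (A : Matrix (Fin (n i.succ)) (Fin m) ℝ) => Real.exp (-(u * frobSq A)))]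
    calc (∏ i : Fin k, ∫ A, Real.exp (-(u * frobSq A)) ∂(matVolume (n i.succ) m))
        = ∏ i : Fin k, Real.sqrt (π / u) ^ (n i.succ * m) :=
          Finset.prod_congr rfl fun i _ => gauss_mat hu
      _ = Real.sqrt (π / u) ^ (∑ i : Fin k, n i.succ * m) :=
          Finset.prod_pow_eq_pow_sum Finset.univ (fun i : Fin k => n i.succ * m) _
      _ = Real.sqrt (π / u) ^ D := by rw [hDdef, hMdef, Finset.sum_mul]
  -- Tonelli
  have hswap : ∫⁻ t, ∫⁻ u in Set.Ioi (0:ℝ), F t u ∂volume ∂μ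
      = ∫⁻ u in Set.Ioi (0:ℝ), ∫⁻ t, F t u ∂μ ∂volume :=
    MeasureTheory.lintegral_lintegral_swap hFmeas.aemeasurable
  have hL : ∫⁻ t, ∫⁻ u in Set.Ioi (0:ℝ), F t u ∂volume ∂μ
      = (∫⁻ t, ENNReal.ofReal ((1 + S t) ^ (-s)) ∂μ) * ENNReal.ofReal (Real.Gamma s) := by
    rw [← lintegral_mul_const' _ _ ENNReal.ofReal_ne_top]
    refine lintegral_congr fun t => ?_
    show ∫⁻ u in Set.Ioi (0:ℝ), ENNReal.ofReal (u ^ (s - 1) * Real.exp (-((1 + S t) * u))) = _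
    rw [← ofReal_integral_eq_lintegral_ofReal (hInt1 t)
        (ae_restrict_of_forall_mem measurableSet_Ioi fun u hu =>
          mul_nonneg (Real.rpow_nonneg (le_of_lt hu) _) (Real.exp_nonneg _)),
      key t, ENNReal.ofReal_mul (Real.rpow_nonneg (h1S t).le _)]
  have hstep : ∀ u ∈ Set.Ioi (0:ℝ), (∫⁻ t, F t u ∂μ)
      = ENNReal.ofReal (π ^ ((D:ℝ)/2) * (u ^ (c - 1) * Real.exp (-(1 * u)))) := by
    intro u hu
    rw [Set.mem_Ioi] at hu
    have h2 : ∀ t, F t u = ENNReal.ofReal (u ^ (s-1) * Real.exp (-u))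
        * ENNReal.ofReal (Real.exp (-(u * S t))) := by
      intro t
      show ENNReal.ofReal (u ^ (s - 1) * Real.exp (-((1 + S t) * u))) = _
      rw [← ENNReal.ofReal_mul (by positivity)]
      congr 1
      rw [show -((1 + S t) * u) = -u + -(u * S t) by ring, Real.exp_add]
      ring
    simp_rw [h2]
    rw [lintegral_const_mul' _ _ ENNReal.ofReal_ne_top,
      ← ofReal_integral_eq_lintegral_ofReal (hGaussInt u hu)
        (Filter.Eventually.of_forall fun t => Real.exp_nonneg _),
      hGauss u hu, ← ENNReal.ofReal_mul (by positivity)]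
    congr 1
    have hsq : Real.sqrt (π / u) ^ D = π ^ ((D:ℝ)/2) * u ^ (-((D:ℝ)/2)) := by
      rw [Real.sqrt_eq_rpow, ← Real.rpow_natCast ((π/u) ^ (1/2:ℝ)) D,
        ← Real.rpow_mul (by positivity), show (1/2:ℝ) * (D:ℝ) = (D:ℝ)/2 by ring,
        Real.div_rpow hπ.le hu.le, Real.rpow_neg hu.le, div_eq_mul_inv]
    have e1 : u ^ (s-1) * u ^ (-((D:ℝ)/2)) = u ^ (c-1) := by
      rw [← Real.rpow_add hu]; congr 1; rw [hsc]; ring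
    rw [hsq, one_mul, ← e1]; ring
  have hInt2 : IntegrableOn (fun u : ℝ => u ^ (c-1) * Real.exp (-(1*u))) (Set.Ioi 0) := by
    have := integrableOn_rpow_mul_exp_neg_mul_rpow (p := 1) (s := c - 1) (b := 1)
      (by linarith) one_pos one_pos
    simpa only [Real.rpow_one, neg_mul] using this
  have hR : ∫⁻ u in Set.Ioi (0:ℝ), ∫⁻ t, F t u ∂μ ∂volume
      = ENNReal.ofReal ((π:ℝ) ^ ((D:ℝ)/2) * Real.Gamma c) := by
    rw [setLIntegral_congr_fun measurableSet_Ioi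
      (fun u hu => hstep u hu)]
    simp_rw [ENNReal.ofReal_mul (by positivity : (0:ℝ) ≤ π ^ ((D:ℝ)/2))]
    rw [lintegral_const_mul' _ _ ENNReal.ofReal_ne_top,
      ← ofReal_integral_eq_lintegral_ofReal hInt2
        (ae_restrict_of_forall_mem measurableSet_Ioi fun u hu =>
          mul_nonneg (Real.rpow_nonneg (le_of_lt hu) _) (Real.exp_nonneg _)),
      Real.integral_rpow_mul_exp_neg_mul_Ioi hcpos one_pos]
    rw [one_div, inv_one, Real.one_rpow, one_mul]
  have hB : (∫⁻ t, ENNReal.ofReal ((1 + S t) ^ (-s)) ∂μ)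
      = ENNReal.ofReal (π ^ ((D:ℝ)/2) * Real.Gamma c / Real.Gamma s) := by
    have hΓ : 0 < Real.Gamma s := Real.Gamma_pos_of_pos hspos
    rw [ENNReal.ofReal_div_of_pos hΓ,
      ENNReal.eq_div_iff (ne_of_gt (ENNReal.ofReal_pos.mpr hΓ)) ENNReal.ofReal_ne_top,
      mul_comm, ← hL, hswap, hR]
  have hnn : 0 ≤ᵐ[μ] fun t => (1 + S t) ^ (-s) :=
    Filter.Eventually.of_forall fun t => Real.rpow_nonneg (h1S t).le _
  have hmeas2 : AEStronglyMeasurable (fun t => (1 + S t) ^ (-s)) μ :=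
    (((by fun_prop : Measurable fun x : ℝ => x ^ (-s))).comp
      (measurable_const.add hSmeas)).aestronglyMeasurable
  have hfin : ∫ t, (1 + S t) ^ (-s) ∂μ
      = π ^ ((D:ℝ)/2) * Real.Gamma c / Real.Gamma s := by
    rw [MeasureTheory.integral_eq_lintegral_of_nonneg_ae hnn hmeas2, hB,
      ENNReal.toReal_ofReal (by positivity)]
  have hexp : ((N:ℝ) - (n 0:ℝ)) * m / 2 = (D:ℝ)/2 := by
    rw [hDdef, hNM]; push_cast; ring
  rw [hexp]
  exact hfin
end
end
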